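/- In the n-th Engel-type algebra with n ≥ 2, the subspace span{Y_1,...,Y_n} is the unique abelian n-dimensional subspace of the first layer V_1 = span{X, Y_1,...,Y_n}. -/

import Mathlib

abbrev EngelVec (n : ℕ) : Type := ℝ × (Fin n → ℝ) × (Fin n → ℝ) × ℝ
noncomputable def engelBracket (n : ℕ) (u v : EngelVec n) : EngelVec n :=
  (0, 0,
    fun i => u.2.1 i * v.1 - v.2.1 i * u.1,
    ∑ i : Fin n, (u.2.1 i * v.2.2.1 i - v.2.1 i * u.2.2.1 i))

noncomputable instance (n : ℕ) : LieRing (EngelVec n) :=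
  { (inferInstance : AddCommGroup (EngelVec n)) with
    bracket := engelBracket n
    add_lie := by
      intro x y z
      refine Prod.ext ?_ (Prod.ext ?_ (Prod.ext ?_ ?_)) <;>
        first
          | (simp [engelBracket]; done)
          | (funext i; simp [engelBracket]; done)
          | (funext i; simp [engelBracket]; ring)
          | (simp [engelBracket, mul_add, add_mul, Finset.sum_sub_distrib,
              Finset.sum_add_distrib]; ring)
    lie_add := by
      intro x y z
      refine Prod.ext ?_ (Prod.ext ?_ (Prod.ext ?_ ?_)) <;>
        first
          | (simp [engelBracket]; done)
          | (funext i; simp [engelBracket]; done)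
          | (funext i; simp [engelBracket]; ring)
          | (simp [engelBracket, mul_add, add_mul, Finset.sum_sub_distrib,
              Finset.sum_add_distrib]; ring)
    lie_self := by
      intro x
      refine Prod.ext ?_ (Prod.ext ?_ (Prod.ext ?_ ?_)) <;>
        first
          | (simp [engelBracket]; done)
          | (funext i; simp [engelBracket]; done)
          | (funext i; simp [engelBracket]; ring)
          | (simp [engelBracket]; ring)
    leibniz_lie := by
      intro x y z
      refine Prod.ext ?_ (Prod.ext ?_ (Prod.ext ?_ ?_)) <;>
        first
          | (simp [engelBracket]; done)
          | (funext i; simp [engelBracket]; done)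
          | (funext i; simp [engelBracket]; ring)
          | (simp [engelBracket, mul_sub, sub_mul, mul_comm, mul_left_comm,
              Finset.sum_sub_distrib]; ring) }

noncomputable instance (n : ℕ) : LieAlgebra ℝ (EngelVec n) :=
  { (inferInstance : Module ℝ (EngelVec n)) with
    lie_smul := by
      intro c x y
      refine Prod.ext ?_ (Prod.ext ?_ (Prod.ext ?_ ?_)) <;>
        first
          | (simp [Bracket.bracket, engelBracket]; done)
          | (funext i; simp [Bracket.bracket, engelBracket]; ring)
          | (simp [Bracket.bracket, engelBracket, mul_sub, mul_add, Finset.mul_sum,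
              mul_comm, mul_left_comm, Finset.sum_sub_distrib];
             exact Finset.sum_congr rfl fun i _ => by ring) }

noncomputable def engelX (n : ℕ) : EngelVec n := (1, 0, 0, 0)
noncomputable def engelY (n : ℕ) (i : Fin n) : EngelVec n := (0, Pi.single i 1, 0, 0)
noncomputable def engelT (n : ℕ) (i : Fin n) : EngelVec n := (0, 0, Pi.single i 1, 0)
noncomputable def engelZ (n : ℕ) : EngelVec n := (0, 0, 0, 1)

/-- The first layer `V₁ = span{X, Y₁, …, Yₙ}` of the `n`-th Engel-type algebra. -/
noncomputable def engelV1 (n : ℕ) : Submodule ℝ (EngelVec n) :=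
  Submodule.span ℝ ({engelX n} ∪ Set.range (engelY n))

/-- The second layer `V₂ = span{T₁, …, Tₙ}`. -/
noncomputable def engelV2 (n : ℕ) : Submodule ℝ (EngelVec n) :=
  Submodule.span ℝ (Set.range (engelT n))

/-- The third layer `V₃ = ℝZ`. -/
noncomputable def engelV3 (n : ℕ) : Submodule ℝ (EngelVec n) :=
  Submodule.span ℝ {engelZ n}

/-- The subspace `span{Y₁, …, Yₙ}` of the first layer. -/
noncomputable def engelYspan (n : ℕ) : Submodule ℝ (EngelVec n) :=
  Submodule.span ℝ (Set.range (engelY n))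


lemma engel_repr (n : ℕ) (a : ℝ) (y : Fin n → ℝ) :
    (a • engelX n + ∑ i, y i • engelY n i : EngelVec n) = (a, y, 0, 0) := by
  refine Prod.ext ?_ (Prod.ext ?_ ?_)
  · simp [engelX, engelY, Prod.fst_sum]
  · funext j
    simp [engelX, engelY, Prod.fst_sum, Prod.snd_sum, Finset.sum_apply, Pi.single_apply]
  · simp [engelX, engelY, Prod.snd_sum, Prod.fst_sum]

lemma mem_engelV1_iff (n : ℕ) (v : EngelVec n) :
    v ∈ engelV1 n ↔ v.2.2 = 0 := by
  constructor
  · intro hv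
    induction hv using Submodule.span_induction with
    | mem x hx =>
      rcases hx with hx | ⟨i, rfl⟩
      · simp only [Set.mem_singleton_iff] at hx; subst hx; simp [engelX]
      · simp [engelY]
    | zero => simp
    | add x y _ _ hx hy => simp [Prod.ext_iff] at hx hy ⊢; exact ⟨by simp [hx.1, hy.1], by simp [hx.2, hy.2]⟩
    | smul c x _ hx =>
      show c • x.2.2 = 0
      rw [hx, smul_zero]
  · intro hv
    have : v = (v.1, v.2.1, 0, 0) := by
      refine Prod.ext rfl (Prod.ext rfl ?_); exact hv
    rw [this, ← engel_repr]
    refine Submodule.add_mem _ (Submodule.smul_mem _ _ (Submodule.subset_span (Or.inl rfl))) ?_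
    exact Submodule.sum_mem _ fun i _ =>
      Submodule.smul_mem _ _ (Submodule.subset_span (Or.inr ⟨i, rfl⟩))

lemma mem_engelYspan_iff (n : ℕ) (v : EngelVec n) :
    v ∈ engelYspan n ↔ v.1 = 0 ∧ v.2.2 = 0 := by
  constructor
  · intro hv
    induction hv using Submodule.span_induction with
    | mem x hx =>
      obtain ⟨i, rfl⟩ := hx
      simp [engelY]
    | zero => simp
    | add x y _ _ hx hy =>
      simp [Prod.ext_iff] at hx hy ⊢
      exact ⟨by simp [hx.1, hy.1], by simp [hx.2.1, hy.2.1], by simp [hx.2.2, hy.2.2]⟩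
    | smul c x _ hx =>
      exact ⟨by show c • x.1 = 0; rw [hx.1, smul_zero],
        by show c • x.2.2 = 0; rw [hx.2, smul_zero]⟩
  · rintro ⟨h1, h2⟩
    have : v = (0, v.2.1, 0, 0) := by
      refine Prod.ext h1 (Prod.ext rfl ?_); exact h2
    have h3 : v = ∑ i, v.2.1 i • engelY n i := by
      rw [this]
      have := engel_repr n 0 v.2.1
      rw [zero_smul, zero_add] at this
      exact this.symm
    rw [h3]
    exact Submodule.sum_mem _ fun i _ =>
      Submodule.smul_mem _ _ (Submodule.subset_span ⟨i, rfl⟩)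

lemma engelY_li (n : ℕ) : LinearIndependent ℝ (engelY n) := by
  apply LinearIndependent.of_comp
    ((LinearMap.fst ℝ (Fin n → ℝ) ((Fin n → ℝ) × ℝ)).comp
      (LinearMap.snd ℝ ℝ ((Fin n → ℝ) × ((Fin n → ℝ) × ℝ))))
  have h := (Pi.basisFun ℝ (Fin n)).linearIndependent
  convert h using 1
  funext i
  simp [engelY]

lemma engelYspan_finrank (n : ℕ) : Module.finrank ℝ ↥(engelYspan n) = n := by
  have := finrank_span_eq_card (engelY_li n)
  unfold engelYspan
  exact this.trans (Fintype.card_fin n)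

/-- In the `n`-th Engel-type algebra with `n ≥ 2`, the subspace `span{Y₁,…,Yₙ}` is the
unique abelian `n`-dimensional subspace of the first layer `V₁ = span{X, Y₁,…,Yₙ}`. -/
theorem engel_unique_abelian_subspace (n : ℕ) (hn : 2 ≤ n) :
    (engelYspan n ≤ engelV1 n) ∧
    (Module.finrank ℝ ↥(engelYspan n) = n) ∧
    (∀ u ∈ engelYspan n, ∀ v ∈ engelYspan n, ⁅u, v⁆ = (0 : EngelVec n)) ∧
    (∀ H : Submodule ℝ (EngelVec n), H ≤ engelV1 n → Module.finrank ℝ ↥H = n →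
      (∀ u ∈ H, ∀ v ∈ H, ⁅u, v⁆ = (0 : EngelVec n)) → H = engelYspan n) := by
  have hrank := engelYspan_finrank n
  have hle : engelYspan n ≤ engelV1 n := by
    intro v hv
    rw [mem_engelV1_iff]
    exact ((mem_engelYspan_iff n v).1 hv).2
  have hab : ∀ u ∈ engelYspan n, ∀ v ∈ engelYspan n, ⁅u, v⁆ = (0 : EngelVec n) := by
    intro u hu v hv
    rw [mem_engelYspan_iff] at hu hv
    show engelBracket n u v = 0
    have hu2 : u.2.2.1 = 0 := congrArg Prod.fst hu.2
    have hv2 : v.2.2.1 = 0 := congrArg Prod.fst hv.2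
    refine Prod.ext rfl (Prod.ext rfl (Prod.ext ?_ ?_))
    · funext i; simp [engelBracket, hu.1, hv.1]
    · simp [engelBracket, hu2, hv2]
  refine ⟨hle, hrank, hab, ?_⟩
  intro H hH1 hHrank hHab
  have hHle : H ≤ engelYspan n := by
    intro v hv
    rw [mem_engelYspan_iff]
    refine ⟨?_, (mem_engelV1_iff n v).1 (hH1 hv)⟩
    by_contra hv1
    set f : ↥H →ₗ[ℝ] ℝ :=
      (LinearMap.fst ℝ ℝ ((Fin n → ℝ) × ((Fin n → ℝ) × ℝ))).comp H.subtype with hf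
    have hker : LinearMap.ker f ≠ ⊥ := by
      intro hk
      have hinj := LinearMap.ker_eq_bot.mp hk
      have hle1 := LinearMap.finrank_le_finrank_of_injective hinj
      rw [hHrank, Module.finrank_self] at hle1
      omega
    obtain ⟨w, hw0, hwne⟩ := (Submodule.ne_bot_iff _).mp hker
    have hw1 : (w : EngelVec n).1 = 0 := hw0
    have hb := hHab v hv w w.2
    have h3 : (fun i => v.2.1 i * (w : EngelVec n).1 - (w : EngelVec n).2.1 i * v.1)
        = (0 : Fin n → ℝ) := congrArg (fun p => p.2.2.1) hb
    have hwy : (w : EngelVec n).2.1 = 0 := by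
      funext i
      have := congrFun h3 i
      rw [hw1] at this
      simp at this
      rcases this with h | h
      · exact h
      · exact absurd h hv1
    have hw22 : (w : EngelVec n).2.2 = 0 := (mem_engelV1_iff n _).1 (hH1 w.2)
    have : (w : EngelVec n) = 0 := Prod.ext hw1 (Prod.ext hwy hw22)
    exact hwne (Subtype.ext this)
  exact Submodule.eq_of_le_of_finrank_eq hHle (by rw [hHrank, hrank])
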